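/- Let A be an invertible real p×p matrix such that P A Pᵀ is lower triangular for some permutation matrix P, and let L be a lower triangular matrix with strictly positive diagonal entries satisfying L Lᵀ = A Aᵀ. Fix an index j. If either A_{kj} ≠ 0 for some k < j, or (A⁻¹)_{jk} ≠ 0 for some k > j, then the j-th column of L⁻¹ A has at least two nonzero entries. -/
import Mathlib

open Matrix Finset

/-- Auxiliary: a lower-triangular invertible matrix has lower-triangular
inverse, and the diagonal entries of `M` and `M⁻¹` multiply to `1`. -/
lemma lowtri_aux {p : ℕ} (M : Matrix (Fin p) (Fin p) ℝ) (hM : IsUnit M)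
    (h : ∀ i j : Fin p, i < j → M i j = 0) :
    (∀ i j : Fin p, i < j → M⁻¹ i j = 0) ∧ ∀ a, M a a * M⁻¹ a a = 1 := by
  have hbt : M.BlockTriangular OrderDual.toDual := fun i j hij => h i j hij
  obtain ⟨inst⟩ := hM.nonempty_invertible
  have hinv0 : M⁻¹.BlockTriangular OrderDual.toDual :=
    blockTriangular_inv_of_blockTriangular hbt
  have hinv : ∀ i j : Fin p, i < j → M⁻¹ i j = 0 := fun i j hij => hinv0 hij
  refine ⟨hinv, fun a => ?_⟩
  have h1 : (M * M⁻¹) a a = 1 := by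
    rw [Matrix.mul_nonsing_inv M ((Matrix.isUnit_iff_isUnit_det M).mp hM)]
    simp
  rw [Matrix.mul_apply] at h1
  have h2 : ∑ k, M a k * M⁻¹ k a = M a a * M⁻¹ a a := by
    refine Finset.sum_eq_single a (fun k _ hk => ?_) (fun ha => (ha (mem_univ a)).elim)
    rcases lt_or_gt_of_ne hk with hlt | hgt
    · rw [hinv k a hlt, mul_zero]
    · rw [h a k hgt, zero_mul]
  rw [← h2]; exact h1

theorem column_two_nonzero_of_conditions_fail
    {p : ℕ} (A L : Matrix (Fin p) (Fin p) ℝ)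
    (hA : IsUnit A)
    (σ : Equiv.Perm (Fin p))
    (htri : ∀ i j : Fin p, i < j → A (σ i) (σ j) = 0)
    (hLtri : ∀ i j : Fin p, i < j → L i j = 0)
    (hLdiag : ∀ i : Fin p, 0 < L i i)
    (hLL : L * Lᵀ = A * Aᵀ)
    (j : Fin p)
    (h : (∃ k : Fin p, k < j ∧ A k j ≠ 0) ∨ (∃ k : Fin p, j < k ∧ A⁻¹ j k ≠ 0)) :
    ∃ i₁ i₂ : Fin p, i₁ ≠ i₂ ∧ (L⁻¹ * A) i₁ j ≠ 0 ∧ (L⁻¹ * A) i₂ j ≠ 0 := by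
  -- L is invertible
  have hLdet : IsUnit L.det := by
    rw [Matrix.det_of_lowerTriangular L (fun i j hij => hLtri i j hij)]
    exact (Finset.prod_pos (fun i _ => hLdiag i)).ne'.isUnit
  have hLunit : IsUnit L := (Matrix.isUnit_iff_isUnit_det L).mpr hLdet
  obtain ⟨hLinvtri, -⟩ := lowtri_aux L hLunit hLtri
  -- diagonal entries of A and A⁻¹ are nonzero
  have hBunit : IsUnit (A.submatrix σ σ) := (isUnit_submatrix_equiv σ σ).mpr hA
  obtain ⟨-, hBdiag⟩ := lowtri_aux (A.submatrix σ σ) hBunit (fun i j hij => htri i j hij)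
  have hdiag : A j j * A⁻¹ j j = 1 := by
    have := hBdiag (σ.symm j)
    rwa [Matrix.inv_submatrix_equiv, Matrix.submatrix_apply, Matrix.submatrix_apply,
      Equiv.apply_symm_apply] at this
  have hAjj : A j j ≠ 0 := left_ne_zero_of_mul_eq_one hdiag
  have hAinvjj : A⁻¹ j j ≠ 0 := right_ne_zero_of_mul_eq_one hdiag
  -- Q := L⁻¹ * A is orthogonal
  set Q : Matrix (Fin p) (Fin p) ℝ := L⁻¹ * A with hQdef
  have hLtdet : IsUnit Lᵀ.det := by rwa [Matrix.det_transpose]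
  have hQQt : Q * Qᵀ = 1 := by
    have e1 : Q * Qᵀ = L⁻¹ * (A * Aᵀ) * Lᵀ⁻¹ := by
      rw [hQdef, Matrix.transpose_mul, Matrix.transpose_nonsing_inv]
      noncomm_ring
    rw [e1, ← hLL, ← Matrix.mul_assoc, Matrix.nonsing_inv_mul L hLdet,
      Matrix.one_mul, Matrix.mul_nonsing_inv Lᵀ hLtdet]
  have hQtQ : Qᵀ * Q = 1 := mul_eq_one_comm.mp hQQt
  by_contra hcon
  push_neg at hcon
  -- column j of Q has unit norm
  have hcol : ∑ k, Q k j * Q k j = 1 := by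
    have := congrArg (fun M => M j j) hQtQ
    simpa [Matrix.mul_apply] using this
  have hex : ∃ i, Q i j ≠ 0 := by
    by_contra hno
    push_neg at hno
    rw [Finset.sum_eq_zero (fun k _ => by rw [hno k, mul_zero])] at hcol
    exact zero_ne_one hcol
  obtain ⟨i, hi⟩ := hex
  have hzero : ∀ k, k ≠ i → Q k j = 0 := fun k hk => hcon i k hk.symm hi
  -- Q i j squares to 1
  have hone : Q i j * Q i j = 1 := by
    rw [← hcol]
    exact (Finset.sum_eq_single (f := fun k => Q k j * Q k j) i
      (fun k _ hk => by simp [hzero k hk])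
      (fun ha => (ha (mem_univ i)).elim)).symm
  -- row i of Q vanishes off j
  have hrow : ∀ k, k ≠ j → Q i k = 0 := by
    have h1 : ∑ k, Q i k * Q i k = 1 := by
      have := congrArg (fun M => M i i) hQQt
      simpa [Matrix.mul_apply] using this
    have h2 : ∑ k ∈ univ \ {j}, Q i k * Q i k = 0 := by
      have := Finset.sum_eq_sum_sdiff_singleton_add (mem_univ j)
        (fun k => Q i k * Q i k)
      rw [h1, hone] at this
      linarith
    intro k hk
    have := (Finset.sum_eq_zero_iff_of_nonneg
      (fun k _ => mul_self_nonneg (Q i k))).mp h2 k (by simp [hk])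
    exact mul_self_eq_zero.mp this
  -- A's column j is Q i j times L's column i
  have hLQ : L * Q = A := by
    rw [hQdef, ← Matrix.mul_assoc, Matrix.mul_nonsing_inv L hLdet, Matrix.one_mul]
  have hAcol : ∀ k, A k j = L k i * Q i j := by
    intro k
    rw [← hLQ, Matrix.mul_apply]
    exact Finset.sum_eq_single (f := fun m => L k m * Q m j) i
      (fun m _ hm => by simp [hzero m hm])
      (fun ha => (ha (mem_univ i)).elim)
  -- A⁻¹'s row j is Q i j times L⁻¹'s row i
  have hAinv : A⁻¹ = Qᵀ * L⁻¹ := by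
    refine Matrix.inv_eq_left_inv ?_
    rw [Matrix.mul_assoc, ← hQdef, hQtQ]
  have hArow : ∀ k, A⁻¹ j k = Q i j * L⁻¹ i k := by
    intro k
    rw [hAinv, Matrix.mul_apply]
    refine Finset.sum_eq_single (f := fun m => Qᵀ j m * L⁻¹ m k) i
      (fun m _ hm => ?_) (fun ha => (ha (mem_univ i)).elim)
    simp [hzero m hm]
  rcases h with ⟨k, hkj, hAkj⟩ | ⟨k, hjk, hAjk⟩
  · -- then i ≤ k < j, but A⁻¹ j j = Q i j * L⁻¹ i j = 0, contradiction
    have hLki : L k i ≠ 0 := fun hz => hAkj (by rw [hAcol k, hz, zero_mul])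
    have hik : ¬ k < i := fun hlt => hLki (hLtri k i hlt)
    have hij : i < j := lt_of_le_of_lt (not_lt.mp hik) hkj
    exact hAinvjj (by rw [hArow j, hLinvtri i j hij, mul_zero])
  · -- then j < k ≤ i, but A j j = L j i * Q i j = 0, contradiction
    have hLik : L⁻¹ i k ≠ 0 := fun hz => hAjk (by rw [hArow k, hz, mul_zero])
    have hki : ¬ i < k := fun hlt => hLik (hLinvtri i k hlt)
    have hji : j < i := lt_of_lt_of_le hjk (not_lt.mp hki)
    exact hAjj (by rw [hAcol j, hLtri j i hji, zero_mul])
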